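/- Consider policies with softmax parameterization updated by exponentiated advantage weights: π^{k+1}(a|s) = π^k(a|s)·exp(η·H·Â^k(s,a))/Z_k(s), where Â^k is the advantage of π^k in an MDP M̂ and Z_k(s) is the normalizer. Then for every k, the improvement in M̂ satisfies Ĵ(π^{k+1}) - Ĵ(π^k) ≥ (1/η) · E_{s ~ d^{π^{k+1}}}[ log Z_k(s) ], and moreover log Z_k(s) ≥ 0 for all s. -/

import Mathlib

open Finset

/-- State distribution at time `t` under stochastic policy `π`. -/
noncomputable def stateDist {S A : Type*} [Fintype S] [Fintype A]
    (P : S → A → S → ℝ) (π : S → A → ℝ) (ρ : S → ℝ) : ℕ → S → ℝ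
  | 0 => ρ
  | (t + 1) => fun s' => ∑ s, ∑ a, stateDist P π ρ t s * π s a * P s a s'

/-- Expected discounted return `J(π)` in the (empirical) MDP `M̂`. -/
noncomputable def Jret {S A : Type*} [Fintype S] [Fintype A]
    (P : S → A → S → ℝ) (π : S → A → ℝ) (ρ : S → ℝ) (r : S → A → ℝ) (γ : ℝ) : ℝ :=
  ∑' t : ℕ, γ ^ t * ∑ s, ∑ a, stateDist P π ρ t s * π s a * r s a

/-- Value function `V^π(s)`. -/
noncomputable def Vval {S A : Type*} [Fintype S] [Fintype A] [DecidableEq S]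
    (P : S → A → S → ℝ) (π : S → A → ℝ) (r : S → A → ℝ) (γ : ℝ) (s0 : S) : ℝ :=
  Jret P π (fun s => if s = s0 then 1 else 0) r γ

/-- Q-function `Q^π(s,a)`. -/
noncomputable def Qval {S A : Type*} [Fintype S] [Fintype A] [DecidableEq S]
    (P : S → A → S → ℝ) (π : S → A → ℝ) (r : S → A → ℝ) (γ : ℝ) (s : S) (a : A) : ℝ :=
  r s a + γ * ∑ s', P s a s' * Vval P π r γ s'

/-- Advantage function `A^π(s,a) = Q^π(s,a) - V^π(s)`. -/
noncomputable def Aval {S A : Type*} [Fintype S] [Fintype A] [DecidableEq S]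
    (P : S → A → S → ℝ) (π : S → A → ℝ) (r : S → A → ℝ) (γ : ℝ) (s : S) (a : A) : ℝ :=
  Qval P π r γ s a - Vval P π r γ s

/-- Normalized discounted state occupancy `d^π(s)`. -/
noncomputable def dOcc {S A : Type*} [Fintype S] [Fintype A]
    (P : S → A → S → ℝ) (π : S → A → ℝ) (ρ : S → ℝ) (γ : ℝ) (s : S) : ℝ :=
  (1 - γ) * ∑' t : ℕ, γ ^ t * stateDist P π ρ t s

/-- Normalizer `Z_k(s)` of the exponentiated-advantage policy update. -/
noncomputable def Znorm {S A : Type*} [Fintype S] [Fintype A] [DecidableEq S]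
    (P : S → A → S → ℝ) (r : S → A → ℝ) (γ η H : ℝ) (π : ℕ → S → A → ℝ) (k : ℕ)
    (s : S) : ℝ :=
  ∑ a, π k s a * Real.exp (η * H * Aval P (π k) r γ s a)


section helpers

variable {S A : Type*} [Fintype S] [Fintype A]

lemma sd_nonneg {P : S → A → S → ℝ} {π : S → A → ℝ} {ρ : S → ℝ}
    (hP0 : ∀ s a s', 0 ≤ P s a s') (hπ0 : ∀ s a, 0 ≤ π s a) (hρ0 : ∀ s, 0 ≤ ρ s) :
    ∀ t s, 0 ≤ stateDist P π ρ t s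
  | 0, s => hρ0 s
  | (t+1), s => by
      simp only [stateDist]
      exact Finset.sum_nonneg fun s' _ => Finset.sum_nonneg fun a _ =>
        mul_nonneg (mul_nonneg (sd_nonneg hP0 hπ0 hρ0 t s') (hπ0 s' a)) (hP0 s' a s)

lemma sd_mass {P : S → A → S → ℝ} {π : S → A → ℝ} {ρ : S → ℝ}
    (hP1 : ∀ s a, ∑ s', P s a s' = 1) (hπ1 : ∀ s, ∑ a, π s a = 1) :
    ∀ t, ∑ s, stateDist P π ρ t s = ∑ s, ρ s
  | 0 => rfl
  | (t+1) => by
      simp only [stateDist]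
      rw [Finset.sum_comm]
      have : ∀ s ∈ Finset.univ, (∑ s' : S, ∑ a : A, stateDist P π ρ t s * π s a * P s a s')
          = stateDist P π ρ t s := by
        intro s _
        rw [Finset.sum_comm]
        have : ∀ a ∈ Finset.univ, (∑ s' : S, stateDist P π ρ t s * π s a * P s a s')
            = stateDist P π ρ t s * π s a := by
          intro a _
          rw [← Finset.mul_sum, hP1, mul_one]
        rw [Finset.sum_congr rfl this, ← Finset.mul_sum, hπ1, mul_one]
      rw [Finset.sum_congr rfl this, sd_mass hP1 hπ1 t]

lemma exp_bound {P : S → A → S → ℝ} {π : S → A → ℝ} {ρ : S → ℝ}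
    (hP0 : ∀ s a s', 0 ≤ P s a s') (hπ0 : ∀ s a, 0 ≤ π s a) (hρ0 : ∀ s, 0 ≤ ρ s)
    (hP1 : ∀ s a, ∑ s', P s a s' = 1) (hπ1 : ∀ s, ∑ a, π s a = 1)
    {c : S → ℝ} {C : ℝ} (hC : 0 ≤ C) (hc : ∀ s, |c s| ≤ C) (t : ℕ) :
    |∑ s, stateDist P π ρ t s * c s| ≤ C * ∑ s, ρ s := by
  calc |∑ s, stateDist P π ρ t s * c s| ≤ ∑ s, |stateDist P π ρ t s * c s| :=
        Finset.abs_sum_le_sum_abs _ _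
    _ ≤ ∑ s, stateDist P π ρ t s * C := by
        refine Finset.sum_le_sum fun s _ => ?_
        rw [abs_mul, abs_of_nonneg (sd_nonneg hP0 hπ0 hρ0 t s)]
        exact mul_le_mul_of_nonneg_left (hc s) (sd_nonneg hP0 hπ0 hρ0 t s)
    _ = C * ∑ s, ρ s := by rw [← Finset.sum_mul, sd_mass hP1 hπ1 t, mul_comm]

lemma summable_aux {γ : ℝ} (hγ0 : 0 ≤ γ) (hγ1 : γ < 1)
    {P : S → A → S → ℝ} {π : S → A → ℝ} {ρ : S → ℝ}
    (hP0 : ∀ s a s', 0 ≤ P s a s') (hπ0 : ∀ s a, 0 ≤ π s a) (hρ0 : ∀ s, 0 ≤ ρ s)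
    (hP1 : ∀ s a, ∑ s', P s a s' = 1) (hπ1 : ∀ s, ∑ a, π s a = 1)
    {c : S → ℝ} {C : ℝ} (hC : 0 ≤ C) (hc : ∀ s, |c s| ≤ C) :
    Summable (fun t : ℕ => γ ^ t * ∑ s, stateDist P π ρ t s * c s) := by
  apply Summable.of_norm_bounded (g := fun t : ℕ => (C * ∑ s, ρ s) * γ ^ t)
  · exact (summable_geometric_of_lt_one hγ0 hγ1).mul_left _
  · intro t
    rw [Real.norm_eq_abs, abs_mul, abs_pow, abs_of_nonneg hγ0, mul_comm]
    exact mul_le_mul_of_nonneg_right (exp_bound hP0 hπ0 hρ0 hP1 hπ1 hC hc t)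
      (pow_nonneg hγ0 t)

end helpers

section helpers2

variable {S A : Type*} [Fintype S] [Fintype A]

lemma pi_r_bound {π : S → A → ℝ} {r : S → A → ℝ}
    (hπ0 : ∀ s a, 0 ≤ π s a) (hπ1 : ∀ s, ∑ a, π s a = 1) (hr : ∀ s a, |r s a| ≤ 1) (s : S) :
    |∑ a, π s a * r s a| ≤ 1 := by
  calc |∑ a, π s a * r s a| ≤ ∑ a, |π s a * r s a| := Finset.abs_sum_le_sum_abs _ _
    _ ≤ ∑ a, π s a := by
        refine Finset.sum_le_sum fun a _ => ?_
        rw [abs_mul, abs_of_nonneg (hπ0 s a)]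
        calc π s a * |r s a| ≤ π s a * 1 := mul_le_mul_of_nonneg_left (hr s a) (hπ0 s a)
          _ = π s a := mul_one _
    _ = 1 := hπ1 s

lemma Jret_eq (P : S → A → S → ℝ) (π : S → A → ℝ) (ρ : S → ℝ) (r : S → A → ℝ) (γ : ℝ) :
    Jret P π ρ r γ = ∑' t : ℕ, γ ^ t * ∑ s, stateDist P π ρ t s * (∑ a, π s a * r s a) := by
  unfold Jret
  refine tsum_congr fun t => ?_
  congr 1
  refine Finset.sum_congr rfl fun s _ => ?_
  rw [Finset.mul_sum]
  exact Finset.sum_congr rfl fun a _ => mul_assoc _ _ _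

lemma sd_linear [DecidableEq S] (P : S → A → S → ℝ) (π : S → A → ℝ) (ρ : S → ℝ) :
    ∀ t s, stateDist P π ρ t s
      = ∑ s0, ρ s0 * stateDist P π (fun s => if s = s0 then 1 else 0) t s
  | 0, s => by
      simp only [stateDist]
      rw [Finset.sum_congr rfl (fun s0 _ => (mul_ite _ _ _ _).trans (by rw [mul_one, mul_zero]))]
      simp
  | (t+1), s => by
      simp only [stateDist]
      have h1 : ∀ s' a, stateDist P π ρ t s' * π s' a * P s' a s
          = ∑ s0, ρ s0 * stateDist P π (fun u => if u = s0 then 1 else 0) t s' * π s' a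
              * P s' a s := by
        intro s' a
        rw [sd_linear P π ρ t s', Finset.sum_mul, Finset.sum_mul]
      calc ∑ s', ∑ a, stateDist P π ρ t s' * π s' a * P s' a s
          = ∑ s', ∑ a, ∑ s0, ρ s0 * stateDist P π (fun u => if u = s0 then 1 else 0) t s'
              * π s' a * P s' a s :=
            Finset.sum_congr rfl fun s' _ => Finset.sum_congr rfl fun a _ => h1 s' a
        _ = ∑ s', ∑ s0, ∑ a, ρ s0 * stateDist P π (fun u => if u = s0 then 1 else 0) t s'
              * π s' a * P s' a s :=
            Finset.sum_congr rfl fun s' _ => Finset.sum_comm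
        _ = ∑ s0, ∑ s', ∑ a, ρ s0 * stateDist P π (fun u => if u = s0 then 1 else 0) t s'
              * π s' a * P s' a s :=
            Finset.sum_comm
        _ = ∑ s0, ρ s0 * ∑ s', ∑ a, stateDist P π (fun u => if u = s0 then 1 else 0) t s'
              * π s' a * P s' a s := by
            refine Finset.sum_congr rfl fun s0 _ => ?_
            rw [Finset.mul_sum]
            refine Finset.sum_congr rfl fun s' _ => ?_
            rw [Finset.mul_sum]
            exact Finset.sum_congr rfl fun a _ => by ring

lemma summable_J {γ : ℝ} (hγ0 : 0 ≤ γ) (hγ1 : γ < 1)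
    {P : S → A → S → ℝ} {π : S → A → ℝ} {ρ : S → ℝ} {r : S → A → ℝ}
    (hP0 : ∀ s a s', 0 ≤ P s a s') (hπ0 : ∀ s a, 0 ≤ π s a) (hρ0 : ∀ s, 0 ≤ ρ s)
    (hP1 : ∀ s a, ∑ s', P s a s' = 1) (hπ1 : ∀ s, ∑ a, π s a = 1) (hr : ∀ s a, |r s a| ≤ 1) :
    Summable (fun t : ℕ => γ ^ t * ∑ s, stateDist P π ρ t s * (∑ a, π s a * r s a)) :=
  summable_aux hγ0 hγ1 hP0 hπ0 hρ0 hP1 hπ1 zero_le_one (pi_r_bound hπ0 hπ1 hr)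

lemma delta_nonneg [DecidableEq S] (s0 : S) : ∀ s : S, (0:ℝ) ≤ if s = s0 then 1 else 0 :=
  fun s => by split <;> norm_num

lemma Jret_linear [DecidableEq S] {γ : ℝ} (hγ0 : 0 ≤ γ) (hγ1 : γ < 1)
    {P : S → A → S → ℝ} {π : S → A → ℝ} {ρ : S → ℝ} {r : S → A → ℝ}
    (hP0 : ∀ s a s', 0 ≤ P s a s') (hπ0 : ∀ s a, 0 ≤ π s a) (hρ0 : ∀ s, 0 ≤ ρ s)
    (hP1 : ∀ s a, ∑ s', P s a s' = 1) (hπ1 : ∀ s, ∑ a, π s a = 1) (hr : ∀ s a, |r s a| ≤ 1) :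
    Jret P π ρ r γ = ∑ s0, ρ s0 * Vval P π r γ s0 := by
  rw [Jret_eq]
  have key : ∀ t : ℕ, γ ^ t * ∑ s, stateDist P π ρ t s * (∑ a, π s a * r s a)
      = ∑ s0, ρ s0 * (γ ^ t * ∑ s, stateDist P π (fun s => if s = s0 then 1 else 0) t s
          * (∑ a, π s a * r s a)) := by
    intro t
    rw [Finset.sum_congr rfl fun s (_ : s ∈ Finset.univ) => by
      rw [sd_linear P π ρ t s, Finset.sum_mul]]
    rw [Finset.sum_comm, Finset.mul_sum]
    refine Finset.sum_congr rfl fun s0 _ => ?_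
    rw [Finset.mul_sum, Finset.mul_sum, Finset.mul_sum]
    exact Finset.sum_congr rfl fun s _ => by ring
  calc (∑' t : ℕ, γ ^ t * ∑ s, stateDist P π ρ t s * (∑ a, π s a * r s a))
      = ∑' t : ℕ, ∑ s0, ρ s0 * (γ ^ t
          * ∑ s, stateDist P π (fun s => if s = s0 then 1 else 0) t s * (∑ a, π s a * r s a)) :=
        by exact tsum_congr key
    _ = ∑ s0, ∑' t : ℕ, ρ s0 * (γ ^ t
          * ∑ s, stateDist P π (fun s => if s = s0 then 1 else 0) t s * (∑ a, π s a * r s a)) := by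
        refine Summable.tsum_finsetSum fun s0 _ => ?_
        exact (summable_J hγ0 hγ1 hP0 hπ0 (delta_nonneg s0) hP1 hπ1 hr).mul_left _
    _ = ∑ s0, ρ s0 * Vval P π r γ s0 := by
        refine Finset.sum_congr rfl fun s0 _ => ?_
        rw [tsum_mul_left, Vval, Jret_eq]

end helpers2

section helpers3

variable {S A : Type*} [Fintype S] [Fintype A]

lemma sd_shift (P : S → A → S → ℝ) (π : S → A → ℝ) (ρ : S → ℝ) :
    ∀ t s', stateDist P π ρ (t + 1) s'
      = stateDist P π (fun s' => ∑ s, ∑ a, ρ s * π s a * P s a s') t s'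
  | 0, s' => rfl
  | (t+1), s' => by
      show (∑ s, ∑ a, stateDist P π ρ (t+1) s * π s a * P s a s') = _
      rw [show stateDist P π (fun s' => ∑ s, ∑ a, ρ s * π s a * P s a s') (t+1) s'
          = ∑ s, ∑ a, stateDist P π (fun s' => ∑ s, ∑ a, ρ s * π s a * P s a s') t s
              * π s a * P s a s' from rfl]
      refine Finset.sum_congr rfl fun s _ => Finset.sum_congr rfl fun a _ => ?_
      rw [sd_shift P π ρ t s]

lemma Jret_unroll {γ : ℝ} (hγ0 : 0 ≤ γ) (hγ1 : γ < 1)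
    {P : S → A → S → ℝ} {π : S → A → ℝ} {ρ : S → ℝ} {r : S → A → ℝ}
    (hP0 : ∀ s a s', 0 ≤ P s a s') (hπ0 : ∀ s a, 0 ≤ π s a) (hρ0 : ∀ s, 0 ≤ ρ s)
    (hP1 : ∀ s a, ∑ s', P s a s' = 1) (hπ1 : ∀ s, ∑ a, π s a = 1) (hr : ∀ s a, |r s a| ≤ 1) :
    Jret P π ρ r γ = (∑ s, ρ s * ∑ a, π s a * r s a)
      + γ * Jret P π (fun s' => ∑ s, ∑ a, ρ s * π s a * P s a s') r γ := by
  rw [Jret_eq, Jret_eq,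
    Summable.tsum_eq_zero_add (summable_J hγ0 hγ1 hP0 hπ0 hρ0 hP1 hπ1 hr)]
  congr 1
  · simp [stateDist]
  · rw [← tsum_mul_left]
    refine tsum_congr fun t => ?_
    rw [Finset.sum_congr rfl fun s (_ : s ∈ Finset.univ) => by rw [sd_shift P π ρ t s]]
    ring

lemma Vval_bound [DecidableEq S] {γ : ℝ} (hγ0 : 0 ≤ γ) (hγ1 : γ < 1)
    {P : S → A → S → ℝ} {π : S → A → ℝ} {r : S → A → ℝ}
    (hP0 : ∀ s a s', 0 ≤ P s a s') (hπ0 : ∀ s a, 0 ≤ π s a)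
    (hP1 : ∀ s a, ∑ s', P s a s' = 1) (hπ1 : ∀ s, ∑ a, π s a = 1) (hr : ∀ s a, |r s a| ≤ 1)
    (s0 : S) : |Vval P π r γ s0| ≤ (1 - γ)⁻¹ := by
  have hδ1 : ∑ s, (fun s => if s = s0 then (1:ℝ) else 0) s = 1 := by simp
  rw [Vval, Jret_eq]
  have hsum := summable_J hγ0 hγ1 hP0 hπ0 (delta_nonneg s0) hP1 hπ1 hr
    (P := P) (π := π) (r := r) (ρ := fun s => if s = s0 then 1 else 0)
  calc |∑' t : ℕ, γ ^ t * ∑ s, stateDist P π (fun s => if s = s0 then 1 else 0) t s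
        * (∑ a, π s a * r s a)|
      ≤ ∑' t : ℕ, γ ^ t := by
        refine (norm_tsum_le_tsum_norm hsum.norm).trans ?_
        refine Summable.tsum_le_tsum (fun t => ?_) hsum.norm (summable_geometric_of_lt_one hγ0 hγ1)
        rw [Real.norm_eq_abs, abs_mul, abs_pow, abs_of_nonneg hγ0]
        calc γ ^ t * |∑ s, stateDist P π (fun s => if s = s0 then 1 else 0) t s
              * (∑ a, π s a * r s a)|
            ≤ γ ^ t * (1 * 1) := by
              refine mul_le_mul_of_nonneg_left ?_ (pow_nonneg hγ0 t)
              have := exp_bound hP0 hπ0 (delta_nonneg s0) hP1 hπ1 zero_le_one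
                (pi_r_bound hπ0 hπ1 hr) (ρ := fun s => if s = s0 then 1 else 0) t
              rwa [hδ1] at this
          _ = γ ^ t := by ring
    _ = (1 - γ)⁻¹ := tsum_geometric_of_lt_one hγ0 hγ1

lemma Bellman [DecidableEq S] {γ : ℝ} (hγ0 : 0 ≤ γ) (hγ1 : γ < 1)
    {P : S → A → S → ℝ} {π : S → A → ℝ} {r : S → A → ℝ}
    (hP0 : ∀ s a s', 0 ≤ P s a s') (hπ0 : ∀ s a, 0 ≤ π s a)
    (hP1 : ∀ s a, ∑ s', P s a s' = 1) (hπ1 : ∀ s, ∑ a, π s a = 1) (hr : ∀ s a, |r s a| ≤ 1)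
    (s : S) : Vval P π r γ s = ∑ a, π s a * Qval P π r γ s a := by
  set ρ : S → ℝ := fun u => if u = s then 1 else 0 with hρ
  have hρ0 : ∀ u, 0 ≤ ρ u := delta_nonneg s
  have step : ∀ s', (∑ u, ∑ a, ρ u * π u a * P u a s') = ∑ a, π s a * P s a s' := by
    intro s'
    rw [Finset.sum_congr rfl fun u (_ : u ∈ Finset.univ) => Finset.sum_congr rfl
      fun a (_ : a ∈ Finset.univ) => show ρ u * π u a * P u a s'
        = (if u = s then π u a * P u a s' else 0) from by
          rw [hρ]; by_cases h : u = s <;> simp [h]]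
    rw [Finset.sum_comm]
    simp
  have h1 : Vval P π r γ s = (∑ u, ρ u * ∑ a, π u a * r u a)
      + γ * Jret P π (fun s' => ∑ u, ∑ a, ρ u * π u a * P u a s') r γ :=
    Jret_unroll hγ0 hγ1 hP0 hπ0 hρ0 hP1 hπ1 hr
  have h2 : (∑ u, ρ u * ∑ a, π u a * r u a) = ∑ a, π s a * r s a := by
    rw [hρ]; simp
  have hρ'0 : ∀ s', 0 ≤ ∑ u, ∑ a, ρ u * π u a * P u a s' := fun s' =>
    Finset.sum_nonneg fun u _ => Finset.sum_nonneg fun a _ =>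
      mul_nonneg (mul_nonneg (hρ0 u) (hπ0 u a)) (hP0 u a s')
  have h3 : Jret P π (fun s' => ∑ u, ∑ a, ρ u * π u a * P u a s') r γ
      = ∑ s', (∑ a, π s a * P s a s') * Vval P π r γ s' := by
    rw [Jret_linear hγ0 hγ1 hP0 hπ0 hρ'0 hP1 hπ1 hr]
    exact Finset.sum_congr rfl fun s' _ => by rw [step s']
  rw [h1, h2, h3]
  have h4 : (∑ s', (∑ a, π s a * P s a s') * Vval P π r γ s')
      = ∑ a, π s a * ∑ s', P s a s' * Vval P π r γ s' := by
    calc ∑ s', (∑ a, π s a * P s a s') * Vval P π r γ s'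
        = ∑ s', ∑ a, π s a * P s a s' * Vval P π r γ s' :=
          Finset.sum_congr rfl fun s' _ => Finset.sum_mul _ _ _
      _ = ∑ a, ∑ s', π s a * P s a s' * Vval P π r γ s' := Finset.sum_comm
      _ = ∑ a, π s a * ∑ s', P s a s' * Vval P π r γ s' := by
          refine Finset.sum_congr rfl fun a _ => ?_
          rw [Finset.mul_sum]
          exact Finset.sum_congr rfl fun s' _ => by ring
  rw [h4, Finset.mul_sum, ← Finset.sum_add_distrib]
  exact Finset.sum_congr rfl fun a _ => by rw [Qval]; ring
end helpers3

section helpers4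

variable {S A : Type*} [Fintype S] [Fintype A] [DecidableEq S]

lemma sum_pi_A_zero {γ : ℝ} (hγ0 : 0 ≤ γ) (hγ1 : γ < 1)
    {P : S → A → S → ℝ} {π : S → A → ℝ} {r : S → A → ℝ}
    (hP0 : ∀ s a s', 0 ≤ P s a s') (hπ0 : ∀ s a, 0 ≤ π s a)
    (hP1 : ∀ s a, ∑ s', P s a s' = 1) (hπ1 : ∀ s, ∑ a, π s a = 1) (hr : ∀ s a, |r s a| ≤ 1)
    (s : S) : ∑ a, π s a * Aval P π r γ s a = 0 := by
  have : ∑ a, π s a * Aval P π r γ s a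
      = (∑ a, π s a * Qval P π r γ s a) - (∑ a, π s a) * Vval P π r γ s := by
    rw [Finset.sum_mul, ← Finset.sum_sub_distrib]
    exact Finset.sum_congr rfl fun a _ => by rw [Aval]; ring
  rw [this, ← Bellman hγ0 hγ1 hP0 hπ0 hP1 hπ1 hr s, hπ1, one_mul, sub_self]

lemma Aval_bound {γ : ℝ} (hγ0 : 0 ≤ γ) (hγ1 : γ < 1)
    {P : S → A → S → ℝ} {π : S → A → ℝ} {r : S → A → ℝ}
    (hP0 : ∀ s a s', 0 ≤ P s a s') (hπ0 : ∀ s a, 0 ≤ π s a)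
    (hP1 : ∀ s a, ∑ s', P s a s' = 1) (hπ1 : ∀ s, ∑ a, π s a = 1) (hr : ∀ s a, |r s a| ≤ 1)
    (s : S) (a : A) : |Aval P π r γ s a| ≤ 2 / (1 - γ) := by
  have hV := Vval_bound hγ0 hγ1 hP0 hπ0 hP1 hπ1 hr (P := P) (π := π) (r := r)
  have h1γ : (0:ℝ) < 1 - γ := by linarith
  have hQ : |Qval P π r γ s a| ≤ 1 + γ * (1 - γ)⁻¹ := by
    rw [Qval]
    refine (abs_add_le _ _).trans ?_
    refine add_le_add (hr s a) ?_
    rw [abs_mul, abs_of_nonneg hγ0]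
    refine mul_le_mul_of_nonneg_left ?_ hγ0
    calc |∑ s', P s a s' * Vval P π r γ s'| ≤ ∑ s', |P s a s' * Vval P π r γ s'| :=
          Finset.abs_sum_le_sum_abs _ _
      _ ≤ ∑ s', P s a s' * (1 - γ)⁻¹ := by
          refine Finset.sum_le_sum fun s' _ => ?_
          rw [abs_mul, abs_of_nonneg (hP0 s a s')]
          exact mul_le_mul_of_nonneg_left (hV s') (hP0 s a s')
      _ = (1 - γ)⁻¹ := by rw [← Finset.sum_mul, hP1, one_mul]
  rw [Aval]
  refine (abs_sub _ _).trans ?_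
  have : 1 + γ * (1 - γ)⁻¹ + (1 - γ)⁻¹ = 2 / (1 - γ) := by
    field_simp
    ring
  calc |Qval P π r γ s a| + |Vval P π r γ s| ≤ (1 + γ * (1 - γ)⁻¹) + (1 - γ)⁻¹ :=
        add_le_add hQ (hV s)
    _ = 2 / (1 - γ) := this

lemma Znorm_ge_one {γ η H : ℝ} (hγ0 : 0 ≤ γ) (hγ1 : γ < 1)
    {P : S → A → S → ℝ} {r : S → A → ℝ}
    (hP0 : ∀ s a s', 0 ≤ P s a s') (hP1 : ∀ s a, ∑ s', P s a s' = 1)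
    (hr : ∀ s a, |r s a| ≤ 1) {π : ℕ → S → A → ℝ}
    (hπ0 : ∀ k s a, 0 ≤ π k s a) (hπ1 : ∀ k s, ∑ a, π k s a = 1)
    (k : ℕ) (s : S) : 1 ≤ Znorm P r γ η H π k s := by
  have key : ∑ a, π k s a * (η * H * Aval P (π k) r γ s a + 1) = 1 := by
    rw [Finset.sum_congr rfl fun a (_ : a ∈ Finset.univ) =>
      show π k s a * (η * H * Aval P (π k) r γ s a + 1)
        = η * H * (π k s a * Aval P (π k) r γ s a) + π k s a from by ring,
      Finset.sum_add_distrib, ← Finset.mul_sum,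
      sum_pi_A_zero hγ0 hγ1 hP0 (hπ0 k) hP1 (hπ1 k) hr s, mul_zero, zero_add, hπ1]
  rw [Znorm, ← key]
  refine Finset.sum_le_sum fun a _ => ?_
  have h := Real.add_one_le_exp (η * H * Aval P (π k) r γ s a)
  exact mul_le_mul_of_nonneg_left h (hπ0 k s a)

lemma log_Znorm_nonneg {γ η H : ℝ} (hγ0 : 0 ≤ γ) (hγ1 : γ < 1)
    {P : S → A → S → ℝ} {r : S → A → ℝ}
    (hP0 : ∀ s a s', 0 ≤ P s a s') (hP1 : ∀ s a, ∑ s', P s a s' = 1)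
    (hr : ∀ s a, |r s a| ≤ 1) {π : ℕ → S → A → ℝ}
    (hπ0 : ∀ k s a, 0 ≤ π k s a) (hπ1 : ∀ k s, ∑ a, π k s a = 1)
    (k : ℕ) (s : S) : 0 ≤ Real.log (Znorm P r γ η H π k s) :=
  Real.log_nonneg (Znorm_ge_one hγ0 hγ1 hP0 hP1 hr hπ0 hπ1 k s)

/-- Per-state inequality: `∑_a π^{k+1}(a|s) · ηH·Â(s,a) ≥ log Z_k(s)`. -/
lemma per_state {γ η H : ℝ} (hγ0 : 0 ≤ γ) (hγ1 : γ < 1) (hη : 0 < η)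
    {P : S → A → S → ℝ} {r : S → A → ℝ}
    (hP0 : ∀ s a s', 0 ≤ P s a s') (hP1 : ∀ s a, ∑ s', P s a s' = 1)
    (hr : ∀ s a, |r s a| ≤ 1) {π : ℕ → S → A → ℝ}
    (hπ0 : ∀ k s a, 0 ≤ π k s a) (hπ1 : ∀ k s, ∑ a, π k s a = 1)
    (hrec : ∀ k s a, π (k + 1) s a =
      π k s a * Real.exp (η * H * Aval P (π k) r γ s a) / Znorm P r γ η H π k s)
    (k : ℕ) (s : S) :
    Real.log (Znorm P r γ η H π k s)
      ≤ ∑ a, π (k+1) s a * (η * H * Aval P (π k) r γ s a) := by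
  have hZ1 : 1 ≤ Znorm P r γ η H π k s := Znorm_ge_one hγ0 hγ1 hP0 hP1 hr hπ0 hπ1 k s
  have hZ0 : 0 < Znorm P r γ η H π k s := lt_of_lt_of_le one_pos hZ1
  set Z := Znorm P r γ η H π k s with hZdef
  -- pointwise: π'(a) * x a ≥ π'(a) - π k s a + π'(a) * log Z
  have point : ∀ a, π (k+1) s a - π k s a + π (k+1) s a * Real.log Z
      ≤ π (k+1) s a * (η * H * Aval P (π k) r γ s a) := by
    intro a
    by_cases h0 : π k s a = 0
    · have : π (k+1) s a = 0 := by rw [hrec, h0, zero_mul, zero_div]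
      rw [this, h0]; simp
    · have hq : 0 < π k s a := lt_of_le_of_ne (hπ0 k s a) (Ne.symm h0)
      have hp : π (k+1) s a = π k s a * Real.exp (η * H * Aval P (π k) r γ s a) / Z := hrec k s a
      have hppos : 0 < π (k+1) s a := by
        rw [hp]; positivity
      have hx : η * H * Aval P (π k) r γ s a
          = Real.log (π (k+1) s a) + Real.log Z - Real.log (π k s a) := by
        have : Real.exp (η * H * Aval P (π k) r γ s a) = π (k+1) s a * Z / π k s a := by
          rw [hp]; field_simp
        rw [← Real.log_exp (η * H * Aval P (π k) r γ s a), this,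
          Real.log_div (by positivity) h0, Real.log_mul (ne_of_gt hppos) (ne_of_gt hZ0)]
      rw [hx, mul_sub, mul_add]
      have hlog : π (k+1) s a - π k s a
          ≤ π (k+1) s a * Real.log (π (k+1) s a) - π (k+1) s a * Real.log (π k s a) := by
        rw [← mul_sub, ← Real.log_div (ne_of_gt hppos) h0]
        have h1 : Real.log (π k s a / π (k+1) s a) ≤ π k s a / π (k+1) s a - 1 :=
          Real.log_le_sub_one_of_pos (by positivity)
        have h2 : Real.log (π k s a / π (k+1) s a) = - Real.log (π (k+1) s a / π k s a) := by
          rw [← Real.log_inv]; congr 1; field_simp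
        rw [h2] at h1
        have : 1 - π k s a / π (k+1) s a ≤ Real.log (π (k+1) s a / π k s a) := by linarith
        calc π (k+1) s a - π k s a
            = π (k+1) s a * (1 - π k s a / π (k+1) s a) := by field_simp
          _ ≤ π (k+1) s a * Real.log (π (k+1) s a / π k s a) :=
              mul_le_mul_of_nonneg_left this (le_of_lt hppos)
      linarith
  calc Real.log Z = (∑ a, (π (k+1) s a - π k s a)) + (∑ a, π (k+1) s a) * Real.log Z := by
        rw [Finset.sum_sub_distrib, hπ1, hπ1]; ring
    _ = ∑ a, (π (k+1) s a - π k s a + π (k+1) s a * Real.log Z) := by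
        rw [Finset.sum_add_distrib, Finset.sum_mul]
    _ ≤ ∑ a, π (k+1) s a * (η * H * Aval P (π k) r γ s a) :=
        Finset.sum_le_sum fun a _ => point a

end helpers4

section helpers5

variable {S A : Type*} [Fintype S] [Fintype A] [DecidableEq S]

lemma pi_weight_bound {p : S → A → ℝ} (hp0 : ∀ s a, 0 ≤ p s a) (hp1 : ∀ s, ∑ a, p s a = 1)
    {x : S → A → ℝ} {C : ℝ} (hx : ∀ s a, |x s a| ≤ C) (s : S) : |∑ a, p s a * x s a| ≤ C := by
  calc |∑ a, p s a * x s a| ≤ ∑ a, |p s a * x s a| := Finset.abs_sum_le_sum_abs _ _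
    _ ≤ ∑ a, p s a * C := by
        refine Finset.sum_le_sum fun a _ => ?_
        rw [abs_mul, abs_of_nonneg (hp0 s a)]
        exact mul_le_mul_of_nonneg_left (hx s a) (hp0 s a)
    _ = C := by rw [← Finset.sum_mul, hp1, one_mul]

set_option maxHeartbeats 1000000 in
/-- Performance difference lemma. -/
lemma PDL {γ : ℝ} (hγ0 : 0 ≤ γ) (hγ1 : γ < 1)
    {P : S → A → S → ℝ} (hP0 : ∀ s a s', 0 ≤ P s a s') (hP1 : ∀ s a, ∑ s', P s a s' = 1)
    {r : S → A → ℝ} (hr : ∀ s a, |r s a| ≤ 1)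
    {ρ : S → ℝ} (hρ0 : ∀ s, 0 ≤ ρ s) (hρ1 : ∑ s, ρ s = 1)
    {p q : S → A → ℝ} (hp0 : ∀ s a, 0 ≤ p s a) (hp1 : ∀ s, ∑ a, p s a = 1)
    (hq0 : ∀ s a, 0 ≤ q s a) (hq1 : ∀ s, ∑ a, q s a = 1) :
    Jret P p ρ r γ - Jret P q ρ r γ
      = ∑' t : ℕ, γ ^ t * ∑ s, stateDist P p ρ t s * (∑ a, p s a * Aval P q r γ s a) := by
  set V : S → ℝ := Vval P q r γ with hV
  have hA : ∀ s, ∑ a, p s a * Aval P q r γ s a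
      = (∑ a, p s a * r s a) + γ * (∑ a, p s a * ∑ s', P s a s' * V s') - V s := by
    intro s
    have h : ∀ a, p s a * Aval P q r γ s a
        = p s a * r s a + γ * (p s a * ∑ s', P s a s' * V s') - p s a * V s := by
      intro a; rw [Aval, Qval]; ring
    rw [Finset.sum_congr rfl fun a _ => h a, Finset.sum_sub_distrib, Finset.sum_add_distrib,
      ← Finset.mul_sum, ← Finset.sum_mul, hp1, one_mul]
  have hW : ∀ t, (∑ s, stateDist P p ρ (t+1) s * V s)
      = ∑ s, stateDist P p ρ t s * (∑ a, p s a * ∑ s', P s a s' * V s') := by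
    intro t
    calc ∑ s', stateDist P p ρ (t+1) s' * V s'
        = ∑ s', (∑ s, ∑ a, stateDist P p ρ t s * p s a * P s a s') * V s' := by
          simp only [stateDist]
      _ = ∑ s', ∑ s, ∑ a, stateDist P p ρ t s * p s a * P s a s' * V s' := by
          refine Finset.sum_congr rfl fun s' _ => ?_
          rw [Finset.sum_mul]
          exact Finset.sum_congr rfl fun s _ => Finset.sum_mul _ _ _
      _ = ∑ s, ∑ s', ∑ a, stateDist P p ρ t s * p s a * P s a s' * V s' := Finset.sum_comm
      _ = ∑ s, ∑ a, ∑ s', stateDist P p ρ t s * p s a * P s a s' * V s' :=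
          Finset.sum_congr rfl fun s _ => Finset.sum_comm
      _ = ∑ s, stateDist P p ρ t s * (∑ a, p s a * ∑ s', P s a s' * V s') := by
          refine Finset.sum_congr rfl fun s _ => ?_
          rw [Finset.mul_sum]
          refine Finset.sum_congr rfl fun a _ => ?_
          rw [Finset.mul_sum, Finset.mul_sum]
          exact Finset.sum_congr rfl fun s' _ => by ring
  have hΦ : ∀ t : ℕ, γ ^ t * (∑ s, stateDist P p ρ t s * (∑ a, p s a * Aval P q r γ s a))
      = γ ^ t * (∑ s, stateDist P p ρ t s * (∑ a, p s a * r s a))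
        + (γ ^ (t+1) * (∑ s, stateDist P p ρ (t+1) s * V s)
          - γ ^ t * (∑ s, stateDist P p ρ t s * V s)) := by
    intro t
    have : (∑ s, stateDist P p ρ t s * (∑ a, p s a * Aval P q r γ s a))
        = (∑ s, stateDist P p ρ t s * (∑ a, p s a * r s a))
          + γ * (∑ s, stateDist P p ρ (t+1) s * V s)
          - (∑ s, stateDist P p ρ t s * V s) := by
      rw [hW t, Finset.mul_sum, ← Finset.sum_add_distrib, ← Finset.sum_sub_distrib]
      refine Finset.sum_congr rfl fun s _ => ?_
      rw [hA s]
      ring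
    rw [this]
    ring
  have hVb : ∀ s, |V s| ≤ (1 - γ)⁻¹ := Vval_bound hγ0 hγ1 hP0 hq0 hP1 hq1 hr
  have hC0 : (0:ℝ) ≤ (1 - γ)⁻¹ := inv_nonneg.mpr (by linarith)
  have Sr : Summable (fun t : ℕ => γ ^ t * ∑ s, stateDist P p ρ t s * (∑ a, p s a * r s a)) :=
    summable_J hγ0 hγ1 hP0 hp0 hρ0 hP1 hp1 hr
  have SW : Summable (fun t : ℕ => γ ^ t * ∑ s, stateDist P p ρ t s * V s) :=
    summable_aux hγ0 hγ1 hP0 hp0 hρ0 hP1 hp1 hC0 hVb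
  have SW' : Summable (fun t : ℕ => γ ^ (t+1) * ∑ s, stateDist P p ρ (t+1) s * V s) :=
    (summable_nat_add_iff 1).mpr SW
  calc Jret P p ρ r γ - Jret P q ρ r γ
      = (∑' t : ℕ, γ ^ t * ∑ s, stateDist P p ρ t s * (∑ a, p s a * r s a))
        + ((∑' t : ℕ, γ ^ (t+1) * ∑ s, stateDist P p ρ (t+1) s * V s)
          - ∑' t : ℕ, γ ^ t * ∑ s, stateDist P p ρ t s * V s) := by
        rw [Jret_eq]
        have h0 : Jret P q ρ r γ = ∑ s, ρ s * V s :=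
          Jret_linear hγ0 hγ1 hP0 hq0 hρ0 hP1 hq1 hr
        have hshift : (∑' t : ℕ, γ ^ t * ∑ s, stateDist P p ρ t s * V s)
            = (∑ s, ρ s * V s)
              + ∑' t : ℕ, γ ^ (t+1) * ∑ s, stateDist P p ρ (t+1) s * V s := by
          rw [Summable.tsum_eq_zero_add SW]
          congr 1
          simp [stateDist]
        rw [h0]
        have := hshift
        linarith [this]
    _ = ∑' t : ℕ, (γ ^ t * (∑ s, stateDist P p ρ t s * (∑ a, p s a * r s a))
          + (γ ^ (t+1) * (∑ s, stateDist P p ρ (t+1) s * V s)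
            - γ ^ t * (∑ s, stateDist P p ρ t s * V s))) := by
        rw [Summable.tsum_add Sr (SW'.sub SW), Summable.tsum_sub SW' SW]
    _ = ∑' t : ℕ, γ ^ t * ∑ s, stateDist P p ρ t s * (∑ a, p s a * Aval P q r γ s a) :=
        tsum_congr fun t => (hΦ t).symm

end helpers5

section helpers6

variable {S A : Type*} [Fintype S] [Fintype A]

lemma sd_le_one {P : S → A → S → ℝ} {p : S → A → ℝ} {ρ : S → ℝ}
    (hP0 : ∀ s a s', 0 ≤ P s a s') (hp0 : ∀ s a, 0 ≤ p s a) (hρ0 : ∀ s, 0 ≤ ρ s)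
    (hP1 : ∀ s a, ∑ s', P s a s' = 1) (hp1 : ∀ s, ∑ a, p s a = 1) (hρ1 : ∑ s, ρ s = 1)
    (t : ℕ) (s : S) : stateDist P p ρ t s ≤ 1 := by
  calc stateDist P p ρ t s ≤ ∑ s', stateDist P p ρ t s' :=
        Finset.single_le_sum (fun s' _ => sd_nonneg hP0 hp0 hρ0 t s') (Finset.mem_univ s)
    _ = 1 := by rw [sd_mass hP1 hp1 t, hρ1]

lemma dOcc_sum_eq {γ : ℝ} (hγ0 : 0 ≤ γ) (hγ1 : γ < 1)
    {P : S → A → S → ℝ} {p : S → A → ℝ} {ρ : S → ℝ}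
    (hP0 : ∀ s a s', 0 ≤ P s a s') (hp0 : ∀ s a, 0 ≤ p s a) (hρ0 : ∀ s, 0 ≤ ρ s)
    (hP1 : ∀ s a, ∑ s', P s a s' = 1) (hp1 : ∀ s, ∑ a, p s a = 1) (hρ1 : ∑ s, ρ s = 1)
    (c : S → ℝ) :
    ∑ s, dOcc P p ρ γ s * c s
      = (1 - γ) * ∑' t : ℕ, γ ^ t * ∑ s, stateDist P p ρ t s * c s := by
  have hsum : ∀ s : S, Summable (fun t : ℕ => γ ^ t * stateDist P p ρ t s * c s) := by
    intro s
    apply Summable.of_norm_bounded (g := fun t : ℕ => |c s| * γ ^ t)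
    · exact (summable_geometric_of_lt_one hγ0 hγ1).mul_left _
    · intro t
      rw [Real.norm_eq_abs, abs_mul, abs_mul, abs_pow, abs_of_nonneg hγ0,
        abs_of_nonneg (sd_nonneg hP0 hp0 hρ0 t s), mul_comm (|c s|) (γ ^ t)]
      refine mul_le_mul_of_nonneg_right ?_ (abs_nonneg _)
      calc γ ^ t * stateDist P p ρ t s ≤ γ ^ t * 1 :=
            mul_le_mul_of_nonneg_left (sd_le_one hP0 hp0 hρ0 hP1 hp1 hρ1 t s) (pow_nonneg hγ0 t)
        _ = γ ^ t := mul_one _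
  calc ∑ s, dOcc P p ρ γ s * c s
      = ∑ s, (1 - γ) * ∑' t : ℕ, γ ^ t * stateDist P p ρ t s * c s := by
        refine Finset.sum_congr rfl fun s _ => ?_
        rw [dOcc, mul_assoc]
        congr 1
        rw [← tsum_mul_right]
      _ = (1 - γ) * ∑ s, ∑' t : ℕ, γ ^ t * stateDist P p ρ t s * c s := by
        rw [Finset.mul_sum]
      _ = (1 - γ) * ∑' t : ℕ, ∑ s, γ ^ t * stateDist P p ρ t s * c s := by
        rw [← Summable.tsum_finsetSum fun s _ => hsum s]
      _ = (1 - γ) * ∑' t : ℕ, γ ^ t * ∑ s, stateDist P p ρ t s * c s := by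
        congr 1
        refine tsum_congr fun t => ?_
        rw [Finset.mul_sum]
        exact Finset.sum_congr rfl fun s _ => mul_assoc _ _ _

end helpers6

set_option maxHeartbeats 1000000 in
/-- Lower bound on policy improvement in the empirical MDP `M̂` (Lemma 5 of Agarwal et al.):
for exponentiated-advantage updates `π^{k+1}(a|s) = π^k(a|s) exp(η H Â^k(s,a)) / Z_k(s)`,
every step satisfies `Ĵ(π^{k+1}) - Ĵ(π^k) ≥ (1/η) E_{s ~ d^{π^{k+1}}}[log Z_k(s)]`, and
`log Z_k(s) ≥ 0` for every `s`. -/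
theorem stmt_10 {S A : Type*} [Fintype S] [Fintype A] [DecidableEq S]
    (γ : ℝ) (hγ0 : 0 ≤ γ) (hγ1 : γ < 1)
    (P : S → A → S → ℝ) (hP0 : ∀ s a s', 0 ≤ P s a s') (hP1 : ∀ s a, ∑ s', P s a s' = 1)
    (r : S → A → ℝ) (hr : ∀ s a, |r s a| ≤ 1)
    (ρ : S → ℝ) (hρ0 : ∀ s, 0 ≤ ρ s) (hρ1 : ∑ s, ρ s = 1)
    (η H : ℝ) (hη : 0 < η) (hH : H = 1 / (1 - γ))
    (π : ℕ → S → A → ℝ)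
    (hπ0 : ∀ k s a, 0 ≤ π k s a) (hπ1 : ∀ k s, ∑ a, π k s a = 1)
    (hrec : ∀ k s a, π (k + 1) s a =
      π k s a * Real.exp (η * H * Aval P (π k) r γ s a) / Znorm P r γ η H π k s) :
    ∀ k, (Jret P (π (k + 1)) ρ r γ - Jret P (π k) ρ r γ ≥
        (1 / η) * ∑ s, dOcc P (π (k + 1)) ρ γ s * Real.log (Znorm P r γ η H π k s)) ∧
      ∀ s, 0 ≤ Real.log (Znorm P r γ η H π k s) := by
  intro k
  have h1γ : (0:ℝ) < 1 - γ := by linarith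
  have hHpos : 0 < H := by rw [hH]; positivity
  have hηH : 0 < η * H := mul_pos hη hHpos
  refine ⟨?_, fun s => log_Znorm_nonneg hγ0 hγ1 hP0 hP1 hr hπ0 hπ1 k s⟩
  set Zl : S → ℝ := fun s => Real.log (Znorm P r γ η H π k s) with hZl
  have hAb : ∀ s a, |Aval P (π k) r γ s a| ≤ 2 / (1 - γ) :=
    Aval_bound hγ0 hγ1 hP0 (hπ0 k) hP1 (hπ1 k) hr
  have hps : ∀ s, (1 - γ) / η * Zl s ≤ ∑ a, π (k+1) s a * Aval P (π k) r γ s a := by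
    intro s
    have h := per_state hγ0 hγ1 hη hP0 hP1 hr hπ0 hπ1 hrec k s
    have h2 : (∑ a, π (k+1) s a * (η * H * Aval P (π k) r γ s a))
        = (η * H) * ∑ a, π (k+1) s a * Aval P (π k) r γ s a := by
      rw [Finset.mul_sum]; exact Finset.sum_congr rfl fun a _ => by ring
    rw [h2] at h
    have h3 : (1 - γ) / η * Zl s
        ≤ (1 - γ) / η * ((η * H) * ∑ a, π (k+1) s a * Aval P (π k) r γ s a) :=
      mul_le_mul_of_nonneg_left h (by positivity)
    have h4 : (1 - γ) / η * (η * H) = 1 := by rw [hH]; field_simp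
    rwa [← mul_assoc, h4, one_mul] at h3
  have hZlb : ∀ s, |Zl s| ≤ η * H * (2 / (1 - γ)) := by
    intro s
    have hZ1 := Znorm_ge_one hγ0 hγ1 hP0 hP1 hr hπ0 hπ1 k s (η := η) (H := H)
    rw [hZl, abs_of_nonneg (Real.log_nonneg hZ1)]
    refine (Real.log_le_iff_le_exp (lt_of_lt_of_le one_pos hZ1)).mpr ?_
    rw [Znorm]
    calc ∑ a, π k s a * Real.exp (η * H * Aval P (π k) r γ s a)
        ≤ ∑ a, π k s a * Real.exp (η * H * (2 / (1 - γ))) := by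
          refine Finset.sum_le_sum fun a _ => ?_
          refine mul_le_mul_of_nonneg_left (Real.exp_le_exp.mpr ?_) (hπ0 k s a)
          calc η * H * Aval P (π k) r γ s a ≤ η * H * |Aval P (π k) r γ s a| :=
                mul_le_mul_of_nonneg_left (le_abs_self _) hηH.le
            _ ≤ η * H * (2 / (1 - γ)) := mul_le_mul_of_nonneg_left (hAb s a) hηH.le
      _ = Real.exp (η * H * (2 / (1 - γ))) := by rw [← Finset.sum_mul, hπ1, one_mul]
  have hPDL := PDL hγ0 hγ1 hP0 hP1 hr hρ0 hρ1 (hπ0 (k+1)) (hπ1 (k+1)) (hπ0 k) (hπ1 k)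
    (r := r)
  have hRHS : (1/η) * ∑ s, dOcc P (π (k+1)) ρ γ s * Zl s
      = ∑' t : ℕ, γ ^ t * ∑ s, stateDist P (π (k+1)) ρ t s * ((1 - γ) / η * Zl s) := by
    rw [dOcc_sum_eq hγ0 hγ1 hP0 (hπ0 (k+1)) hρ0 hP1 (hπ1 (k+1)) hρ1 Zl]
    have key : ∀ t : ℕ, γ ^ t * ∑ s, stateDist P (π (k+1)) ρ t s * ((1 - γ) / η * Zl s)
        = (1 - γ) / η * (γ ^ t * ∑ s, stateDist P (π (k+1)) ρ t s * Zl s) := by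
      intro t
      have : (∑ s, stateDist P (π (k+1)) ρ t s * ((1 - γ) / η * Zl s))
          = (1 - γ) / η * ∑ s, stateDist P (π (k+1)) ρ t s * Zl s := by
        rw [Finset.mul_sum]; exact Finset.sum_congr rfl fun s _ => by ring
      rw [this]; ring
    rw [tsum_congr key, tsum_mul_left]
    ring
  have hC2 : (0:ℝ) ≤ 2 / (1 - γ) := by positivity
  have SL : Summable (fun t : ℕ => γ ^ t * ∑ s, stateDist P (π (k+1)) ρ t s
      * (∑ a, π (k+1) s a * Aval P (π k) r γ s a)) :=
    summable_aux hγ0 hγ1 hP0 (hπ0 (k+1)) hρ0 hP1 (hπ1 (k+1)) hC2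
      (fun s => pi_weight_bound (hπ0 (k+1)) (hπ1 (k+1)) hAb s)
  have hCZ : (0:ℝ) ≤ (1 - γ) / η * (η * H * (2 / (1 - γ))) := by positivity
  have hcz : ∀ s, |(1 - γ) / η * Zl s| ≤ (1 - γ) / η * (η * H * (2 / (1 - γ))) := by
    intro s
    rw [abs_mul, abs_of_nonneg (by positivity : (0:ℝ) ≤ (1 - γ) / η)]
    exact mul_le_mul_of_nonneg_left (hZlb s) (by positivity)
  have SR : Summable (fun t : ℕ => γ ^ t * ∑ s, stateDist P (π (k+1)) ρ t s
      * ((1 - γ) / η * Zl s)) :=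
    summable_aux hγ0 hγ1 hP0 (hπ0 (k+1)) hρ0 hP1 (hπ1 (k+1)) hCZ hcz
  rw [ge_iff_le, hPDL, hRHS]
  refine Summable.tsum_le_tsum (fun t => ?_) SR SL
  refine mul_le_mul_of_nonneg_left ?_ (pow_nonneg hγ0 t)
  refine Finset.sum_le_sum fun s _ => ?_
  exact mul_le_mul_of_nonneg_left (hps s)
    (sd_nonneg hP0 (hπ0 (k+1)) hρ0 t s)
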